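/- For every step index i with 1 ≤ i ≤ m, and every j ≤ i, the Abaffian matrix produced after i updates of the scaled ABS recursion annihilates all previously used scaling and projection vectors: H_{i+1} Aᵀ v_j = 0 and H_{i+1}ᵀ w_j = 0. -/

import Mathlib

open Matrix

private lemma absAux_vecMulVec_mulVec (n : ℕ) (x y z : Fin n → ℝ) :
    vecMulVec x y *ᵥ z = (y ⬝ᵥ z) • x := by
  ext i
  simp only [mulVec, vecMulVec_apply, dotProduct, Pi.smul_apply, smul_eq_mul, Finset.sum_mul]
  exact Finset.sum_congr rfl fun j _ => by ring

private lemma absAux_vecMul_vecMulVec (n : ℕ) (x y z : Fin n → ℝ) :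
    z ᵥ* vecMulVec x y = (z ⬝ᵥ x) • y := by
  ext i
  simp only [vecMul, vecMulVec_apply, dotProduct, Pi.smul_apply, smul_eq_mul, Finset.sum_mul]
  exact Finset.sum_congr rfl fun j _ => by ring

private lemma absAux_vecMul_smul (n : ℕ) (c : ℝ) (M : Matrix (Fin n) (Fin n) ℝ)
    (z : Fin n → ℝ) : z ᵥ* (c • M) = c • (z ᵥ* M) := by
  ext i
  simp only [vecMul, dotProduct, Matrix.smul_apply, Pi.smul_apply, smul_eq_mul, Finset.mul_sum]
  exact Finset.sum_congr rfl fun j _ => by ring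

/-- After `i` updates of the scaled ABS recursion, the Abaffian matrix `H (i+1)`
annihilates all previously used scaling vectors `v j` (via `Aᵀ`) and all
previously used projection vectors `w j` (via the transpose). -/
theorem abs_scaled_abaffian_annihilation
    (m n : ℕ) (A : Matrix (Fin m) (Fin n) ℝ)
    (H : ℕ → Matrix (Fin n) (Fin n) ℝ)
    (v : ℕ → Fin m → ℝ) (w : ℕ → Fin n → ℝ)
    (hden : ∀ j, 1 ≤ j → j ≤ m → w j ⬝ᵥ (H j *ᵥ (Aᵀ *ᵥ v j)) ≠ 0)
    (hupd : ∀ j, 1 ≤ j → j ≤ m →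
      H (j + 1) = H j -
        (w j ⬝ᵥ (H j *ᵥ (Aᵀ *ᵥ v j)))⁻¹ •
          vecMulVec (H j *ᵥ (Aᵀ *ᵥ v j)) (w j ᵥ* H j)) :
    ∀ i, 1 ≤ i → i ≤ m → ∀ j, 1 ≤ j → j ≤ i →
      H (i + 1) *ᵥ (Aᵀ *ᵥ v j) = 0 ∧ (H (i + 1))ᵀ *ᵥ w j = 0 := by
  intro i
  induction i with
  | zero => intro h; exact absurd h (by omega)
  | succ k ih =>
    intro _ him j hj1 hjk
    set u := H (k + 1) *ᵥ (Aᵀ *ᵥ v (k + 1)) with hu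
    set c := w (k + 1) ⬝ᵥ u with hc
    have hcne : c ≠ 0 := hden (k + 1) (by omega) him
    have hH : H (k + 1 + 1) = H (k + 1) - c⁻¹ • vecMulVec u (w (k + 1) ᵥ* H (k + 1)) :=
      hupd (k + 1) (by omega) him
    -- the mulVec part
    have mv : ∀ z : Fin n → ℝ, H (k + 1 + 1) *ᵥ z =
        H (k + 1) *ᵥ z - (c⁻¹ * (w (k + 1) ⬝ᵥ (H (k + 1) *ᵥ z))) • u := by
      intro z
      rw [hH, sub_mulVec, smul_mulVec, absAux_vecMulVec_mulVec,
        ← dotProduct_mulVec, smul_smul]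
    -- the vecMul part (for the transpose claim)
    have vm : ∀ y : Fin n → ℝ, y ᵥ* H (k + 1 + 1) =
        y ᵥ* H (k + 1) - (c⁻¹ * (y ⬝ᵥ u)) • (w (k + 1) ᵥ* H (k + 1)) := by
      intro y
      rw [hH, vecMul_sub, absAux_vecMul_smul, absAux_vecMul_vecMulVec, smul_smul]
    by_cases hjeq : j = k + 1
    · subst hjeq
      constructor
      · rw [mv, ← hu, ← hc, inv_mul_cancel₀ hcne, one_smul, sub_self]
      · rw [mulVec_transpose, vm, ← hc, inv_mul_cancel₀ hcne, one_smul, sub_self]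
    · have hjk' : j ≤ k := by omega
      have hk1 : 1 ≤ k := le_trans hj1 hjk'
      obtain ⟨e1, e2⟩ := ih hk1 (by omega) j hj1 hjk'
      have e2' : w j ᵥ* H (k + 1) = 0 := by rwa [mulVec_transpose] at e2
      constructor
      · rw [mv, e1, dotProduct_zero, mul_zero, zero_smul, sub_zero]
      · rw [mulVec_transpose, vm, e2']
        have hzero : w j ⬝ᵥ u = 0 := by
          rw [hu, dotProduct_mulVec, e2', zero_dotProduct]
        rw [hzero, mul_zero, zero_smul, sub_zero]
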